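/- Let σ(x) = 1/(1 + exp(−x)) denote the sigmoid function. Consider a finite Markov decision process: a nonempty finite state space S, a nonempty finite action space A, a transition function P : S × A × S → ℝ with P(s,a,s') ≥ 0 and Σ_{s'∈S} P(s,a,s') = 1 for all (s,a), a reward function r : S × A → ℝ, and a discount factor γ ∈ [0,1). Let π be a policy (π(s,a) ≥ 0, Σ_a π(s,a) = 1 for all s) and let V_π : S → ℝ satisfy the Bellman equation V_π(s) = Σ_a π(s,a)·( r(s,a) + γ·Σ_{s'} P(s,a,s')·V_π(s') ). Define Q_π(s,a) = r(s,a) + γ·Σ_{s'} P(s,a,s')·V_π(s'), A_π(s,a) = Q_π(s,a) − V_π(s), Z(s) = Σ_a π(s,a)·σ(A_π(s,a)), and π^σ(s,a) = π(s,a)·σ(A_π(s,a))/Z(s). Then π^σ is a policy, and if V' : S → ℝ satisfies the Bellman equation for π^σ, then V'(s) ≥ V_π(s) for all s ∈ S; consequently, for any initial distribution ρ : S → ℝ with ρ(s) ≥ 0 and Σ_s ρ(s) = 1, the policy values satisfy J(π^σ) = Σ_s ρ(s)·V'(s) ≥ Σ_s ρ(s)·V_π(s) = J(π). -/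
import Mathlib


open Finset

/-- The sigmoid function `σ(x) = 1 / (1 + exp (−x))`. -/
noncomputable def sigmoid (x : ℝ) : ℝ := 1 / (1 + Real.exp (-x))

lemma sigmoid_pos (x : ℝ) : 0 < sigmoid x := by
  unfold sigmoid; positivity

lemma sigmoid_key (x : ℝ) : x / 2 ≤ sigmoid x * x := by
  have h1 : (0:ℝ) < 1 + Real.exp (-x) := by positivity
  rcases le_or_gt 0 x with hx | hx
  · have he : Real.exp (-x) ≤ 1 := Real.exp_le_one_iff.mpr (by linarith)
    have hs : 1/2 ≤ sigmoid x := by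
      rw [sigmoid, le_div_iff₀ h1]; linarith
    nlinarith
  · have he : 1 ≤ Real.exp (-x) := Real.one_le_exp (by linarith)
    have hs : sigmoid x ≤ 1/2 := by
      rw [sigmoid, div_le_iff₀ h1]; linarith
    nlinarith

/-- SAG policy improvement (Proposition 1): in a finite MDP, the sigmoid-tilted
policy `π^σ(s,a) = π(s,a)·σ(A_π(s,a))/Z(s)` (with `Z(s) = Σ_a π(s,a)·σ(A_π(s,a))`
and advantage `A_π(s,a) = Q_π(s,a) − V_π(s)`) is a policy, any solution `V'` of
its Bellman equation dominates `V_π` pointwise, and hence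
`J(π^σ) = Σ_s ρ(s)·V'(s) ≥ Σ_s ρ(s)·V_π(s) = J(π)` for any initial
distribution `ρ`. -/
theorem sag_policy_improvement
    {S A : Type*} [Fintype S] [Fintype A] [Nonempty S] [Nonempty A]
    (P : S → A → S → ℝ) (hP : ∀ s a s', 0 ≤ P s a s')
    (hPsum : ∀ s a, ∑ s', P s a s' = 1)
    (r : S → A → ℝ) (γ : ℝ) (hγ0 : 0 ≤ γ) (hγ1 : γ < 1)
    (π : S → A → ℝ) (hπ : ∀ s a, 0 ≤ π s a) (hπsum : ∀ s, ∑ a, π s a = 1)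
    (Vπ : S → ℝ)
    (hV : ∀ s, Vπ s = ∑ a, π s a * (r s a + γ * ∑ s', P s a s' * Vπ s'))
    (Aπ : S → A → ℝ)
    (hA : ∀ s a, Aπ s a = (r s a + γ * ∑ s', P s a s' * Vπ s') - Vπ s)
    (Z : S → ℝ) (hZ : ∀ s, Z s = ∑ a, π s a * sigmoid (Aπ s a))
    (πσ : S → A → ℝ) (hπσ : ∀ s a, πσ s a = π s a * sigmoid (Aπ s a) / Z s) :
    (∀ s a, 0 ≤ πσ s a) ∧ (∀ s, ∑ a, πσ s a = 1) ∧
      ∀ V' : S → ℝ,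
        (∀ s, V' s = ∑ a, πσ s a * (r s a + γ * ∑ s', P s a s' * V' s')) →
          (∀ s, Vπ s ≤ V' s) ∧
            ∀ ρ : S → ℝ, (∀ s, 0 ≤ ρ s) → (∑ s, ρ s = 1) →
              ∑ s, ρ s * Vπ s ≤ ∑ s, ρ s * V' s := by
  -- Z is positive
  have hZpos : ∀ s, 0 < Z s := by
    intro s
    rw [hZ s]
    have hex : ∃ a : A, 0 < π s a := by
      by_contra h
      push_neg at h
      have : ∑ a, π s a = 0 := Finset.sum_eq_zero fun a _ =>
        le_antisymm (h a) (hπ s a)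
      rw [hπsum s] at this; norm_num at this
    obtain ⟨a0, ha0⟩ := hex
    refine Finset.sum_pos' (fun a _ => mul_nonneg (hπ s a) (sigmoid_pos _).le)
      ⟨a0, Finset.mem_univ a0, mul_pos ha0 (sigmoid_pos _)⟩
  have hπσ0 : ∀ s a, 0 ≤ πσ s a := fun s a => by
    rw [hπσ]
    exact div_nonneg (mul_nonneg (hπ s a) (sigmoid_pos _).le) (hZpos s).le
  have hπσsum : ∀ s, ∑ a, πσ s a = 1 := by
    intro s
    simp only [hπσ]
    rw [← Finset.sum_div, ← hZ s, div_self (hZpos s).ne']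
  -- expected advantage under π is zero
  have hAzero : ∀ s, ∑ a, π s a * Aπ s a = 0 := by
    intro s
    have : ∑ a, π s a * Aπ s a
        = (∑ a, π s a * (r s a + γ * ∑ s', P s a s' * Vπ s'))
          - (∑ a, π s a) * Vπ s := by
      rw [Finset.sum_mul, ← Finset.sum_sub_distrib]
      exact Finset.sum_congr rfl fun a _ => by rw [hA]; ring
    rw [this, hπsum s, ← hV s]; ring
  -- expected advantage under πσ is nonnegative
  have hσA : ∀ s, 0 ≤ ∑ a, πσ s a * Aπ s a := by
    intro s
    have h1 : 0 ≤ ∑ a, π s a * (sigmoid (Aπ s a) * Aπ s a) := by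
      have h2 : ∑ a, π s a * (Aπ s a / 2) ≤ ∑ a, π s a * (sigmoid (Aπ s a) * Aπ s a) :=
        Finset.sum_le_sum fun a _ =>
          mul_le_mul_of_nonneg_left (sigmoid_key _) (hπ s a)
      have h3 : ∑ a, π s a * (Aπ s a / 2) = 0 := by
        have : ∑ a, π s a * (Aπ s a / 2) = (∑ a, π s a * Aπ s a) / 2 := by
          rw [Finset.sum_div]
          exact Finset.sum_congr rfl fun a _ => by ring
        rw [this, hAzero s]; norm_num
      linarith
    have : ∑ a, πσ s a * Aπ s a
        = (∑ a, π s a * (sigmoid (Aπ s a) * Aπ s a)) / Z s := by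
      rw [Finset.sum_div]
      exact Finset.sum_congr rfl fun a _ => by rw [hπσ]; ring
    rw [this]
    exact div_nonneg h1 (hZpos s).le
  refine ⟨hπσ0, hπσsum, ?_⟩
  intro V' hV'
  have key : ∀ s, Vπ s ≤ V' s := by
    set W : S → ℝ := fun s => V' s - Vπ s with hW
    -- Bellman-difference identity
    have hid : ∀ s, W s = (∑ a, πσ s a * Aπ s a)
        + γ * ∑ a, πσ s a * ∑ s', P s a s' * W s' := by
      intro s
      have hsplit : ∀ a, πσ s a * (r s a + γ * ∑ s', P s a s' * V' s')
          = πσ s a * Aπ s a + πσ s a * Vπ s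
            + γ * (πσ s a * ∑ s', P s a s' * W s') := by
        intro a
        have hPV : ∑ s', P s a s' * V' s'
            = (∑ s', P s a s' * Vπ s') + ∑ s', P s a s' * W s' := by
          rw [← Finset.sum_add_distrib]
          exact Finset.sum_congr rfl fun s' _ => by simp [hW]; ring
        rw [hPV, hA]; ring
      have : V' s = (∑ a, πσ s a * Aπ s a) + (∑ a, πσ s a) * Vπ s
          + γ * ∑ a, πσ s a * ∑ s', P s a s' * W s' := by
        rw [hV' s]
        rw [Finset.sum_congr rfl fun a _ => hsplit a]
        rw [Finset.sum_add_distrib, Finset.sum_add_distrib, Finset.sum_mul,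
          ← Finset.mul_sum]
      rw [hπσsum s] at this
      simp only [hW]
      rw [this]; ring
    obtain ⟨s0, _, hs0⟩ := Finset.exists_min_image Finset.univ W ⟨Classical.arbitrary S, Finset.mem_univ _⟩
    set m := W s0 with hm
    have hlow : ∀ s, γ * m ≤ W s := by
      intro s
      have hinner : ∀ a, m ≤ ∑ s', P s a s' * W s' := by
        intro a
        calc m = ∑ s', P s a s' * m := by rw [← Finset.sum_mul, hPsum]; ring
        _ ≤ ∑ s', P s a s' * W s' :=
          Finset.sum_le_sum fun s' _ =>
            mul_le_mul_of_nonneg_left (hs0 s' (Finset.mem_univ s')) (hP s a s')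
      have houter : m ≤ ∑ a, πσ s a * ∑ s', P s a s' * W s' := by
        calc m = ∑ a, πσ s a * m := by rw [← Finset.sum_mul, hπσsum]; ring
        _ ≤ _ := Finset.sum_le_sum fun a _ =>
          mul_le_mul_of_nonneg_left (hinner a) (hπσ0 s a)
      have := hσA s
      rw [hid s]
      nlinarith
    have hm0 : 0 ≤ m := by
      have := hlow s0
      nlinarith
    intro s
    have h0 : (0:ℝ) ≤ W s := le_trans (mul_nonneg hγ0 hm0) (hlow s)
    simp only [hW] at h0
    linarith
  refine ⟨key, fun ρ hρ _ => Finset.sum_le_sum fun s _ =>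
    mul_le_mul_of_nonneg_left (key s) (hρ s)⟩
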